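/- arXiv:0812.3724 — 4 statements merged into one kernel-verified Lean document; each statement's English description precedes it below -/
import Mathlib

section
/- For every complex number z and real x, ∑_{n=0}^∞ (z^n/√(n!)) φ_n(x) = π^{-1/4} exp(−(z² + x²)/2) exp(√2 · z x), where φ_n are the normalized Hermite functions. -/
/-- The physicists' Hermite polynomials via the Rodrigues formula. -/
noncomputable def hermitePoly (n : ℕ) (x : ℝ) : ℝ :=
  (-1 : ℝ) ^ n * Real.exp (x ^ 2) * iteratedDeriv n (fun y => Real.exp (-y ^ 2)) x

/-- The normalized Hermite functions `φ_n(x) = e^{-x²/2} H_n(x) / √(2^n n! √π)`. -/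
noncomputable def hermiteFun (n : ℕ) (x : ℝ) : ℝ :=
  Real.exp (-x ^ 2 / 2) * hermitePoly n x
    / Real.sqrt (2 ^ n * n.factorial * Real.sqrt Real.pi)

private noncomputable def gC : ℂ → ℂ := fun w => Complex.exp (-w ^ 2)

private lemma hgC : Differentiable ℂ gC := ((differentiable_pow 2).neg).cexp

private lemma hgCn (n : ℕ) : Differentiable ℂ (iteratedDeriv n gC) := by
  induction n with
  | zero => simpa using hgC
  | succ n ih =>
    rw [iteratedDeriv_succ]
    exact Complex.analyticOnNhd_univ_iff_differentiable.mp
      ((Complex.analyticOnNhd_univ_iff_differentiable.mpr ih).deriv)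

private lemma keyB (n : ℕ) (x : ℝ) :
    iteratedDeriv n gC (x : ℂ) = ((iteratedDeriv n (fun y => Real.exp (-y ^ 2)) x : ℝ) : ℂ) := by
  induction n generalizing x with
  | zero => simp [gC, Complex.ofReal_exp]
  | succ n ih =>
    have hd : HasDerivAt (iteratedDeriv n gC) (deriv (iteratedDeriv n gC) (x : ℂ)) (x : ℂ) :=
      ((hgCn n) (x : ℂ)).hasDerivAt
    set d := deriv (iteratedDeriv n gC) (x : ℂ)
    have h2 : HasDerivAt (fun t : ℝ => iteratedDeriv n (fun y => Real.exp (-y ^ 2)) t) d.re x := by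
      have := hd.real_of_complex
      convert this using 2 with t
      rw [ih t]; simp
    have h3 : HasDerivAt (fun t : ℝ =>
        ((iteratedDeriv n (fun y => Real.exp (-y ^ 2)) t : ℝ) : ℂ)) (d.re : ℂ) x :=
      h2.ofReal_comp
    have h1' : HasDerivAt (fun t : ℝ =>
        ((iteratedDeriv n (fun y => Real.exp (-y ^ 2)) t : ℝ) : ℂ)) d x := by
      convert hd.comp_ofReal using 2 with t; rw [ih t]
    have hdre : d = (d.re : ℂ) := h1'.unique h3
    rw [iteratedDeriv_succ, iteratedDeriv_succ]
    rw [show deriv (iteratedDeriv n gC) (x : ℂ) = d from rfl, hdre, h2.deriv]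

/-- `∑ (zⁿ/√(n!)) φ_n(x) = π^{-1/4} exp(−(z²+x²)/2) exp(√2·zx)` for `z ∈ ℂ`, `x ∈ ℝ`. -/
theorem exponential_vector_formula (z : ℂ) (x : ℝ) :
    ∑' n : ℕ, z ^ n / (Real.sqrt n.factorial : ℂ) * (hermiteFun n x : ℂ)
      = ((Real.pi ^ (-(1 / 4 : ℝ)) : ℝ) : ℂ)
        * Complex.exp (-(z ^ 2 + (x : ℂ) ^ 2) / 2)
        * Complex.exp ((Real.sqrt 2 : ℂ) * z * x) := by
  have hs2 : ((Real.sqrt 2 : ℝ) : ℂ) ≠ 0 := by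
    norm_cast; positivity
  have hs2sq : ((Real.sqrt 2 : ℝ) : ℂ) * ((Real.sqrt 2 : ℝ) : ℂ) = 2 := by
    norm_cast; rw [Real.mul_self_sqrt (by norm_num)]
  set t : ℂ := z / ((Real.sqrt 2 : ℝ) : ℂ) with ht
  set C : ℂ := (((Real.sqrt (Real.sqrt Real.pi) : ℝ) : ℂ))⁻¹ * Complex.exp ((x : ℂ) ^ 2 / 2)
    with hC
  have hsum := (Complex.hasSum_taylorSeries_of_entire hgC (x : ℂ) ((x : ℂ) - t)).mul_left C
  have heq : ∀ n : ℕ, z ^ n / (Real.sqrt n.factorial : ℂ) * (hermiteFun n x : ℂ)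
      = C * ((n.factorial : ℂ)⁻¹ • (((x : ℂ) - t) - (x : ℂ)) ^ n • iteratedDeriv n gC (x : ℂ)) := by
    intro n
    have hfn : ((Real.sqrt n.factorial : ℝ) : ℂ) ≠ 0 := by
      norm_cast; positivity
    have hfnsq : ((Real.sqrt n.factorial : ℝ) : ℂ) * ((Real.sqrt n.factorial : ℝ) : ℂ)
        = (n.factorial : ℂ) := by
      norm_cast; rw [Real.mul_self_sqrt (by positivity)]
    have hfn0 : (n.factorial : ℂ) ≠ 0 := by
      rw [← hfnsq]; exact mul_ne_zero hfn hfn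
    have hsp : ((Real.sqrt (Real.sqrt Real.pi) : ℝ) : ℂ) ≠ 0 := by
      norm_cast; positivity
    have hsplit : Real.sqrt (2 ^ n * n.factorial * Real.sqrt Real.pi)
        = (Real.sqrt 2) ^ n * Real.sqrt n.factorial * Real.sqrt (Real.sqrt Real.pi) := by
      rw [Real.sqrt_mul (by positivity), Real.sqrt_mul (by positivity),
        show ((2:ℝ)^n) = (Real.sqrt 2 ^ n)^2 by
          rw [← pow_mul, pow_mul', Real.sq_sqrt (by norm_num)],
        Real.sqrt_sq (pow_nonneg (Real.sqrt_nonneg 2) n)]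
    have hexp : Complex.exp (-(x:ℂ)^2/2) * Complex.exp ((x:ℂ)^2) = Complex.exp ((x:ℂ)^2/2) := by
      rw [← Complex.exp_add]; ring_nf
    rw [keyB n x]
    unfold hermiteFun hermitePoly
    rw [hsplit]
    push_cast [Complex.ofReal_exp]
    rw [smul_eq_mul, smul_eq_mul, hC]
    rw [show ((x : ℂ) - t) - (x : ℂ) = -t by ring, ht]
    rw [show (-(z / ((Real.sqrt 2 : ℝ) : ℂ))) ^ n = (-1)^n * z^n / ((Real.sqrt 2 : ℝ) : ℂ)^n by
      rw [neg_pow, div_pow]; ring]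
    field_simp [hfn, hs2, hsp]
    rw [neg_div] at hexp
    linear_combination (z ^ n
        * ((iteratedDeriv n (fun y => Real.exp (-y ^ 2)) x : ℝ) : ℂ)
        * (n.factorial : ℂ)) * hexp
      - (Complex.exp ((x:ℂ) ^ 2 / 2) * z ^ n
        * ((iteratedDeriv n (fun y => Real.exp (-y ^ 2)) x : ℝ) : ℂ)) * hfnsq
  rw [tsum_congr heq, hsum.tsum_eq]
  have hpi : ((Real.pi ^ (-(1 / 4 : ℝ)) : ℝ) : ℂ)
      = (((Real.sqrt (Real.sqrt Real.pi) : ℝ) : ℂ))⁻¹ := by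
    rw [show Real.sqrt (Real.sqrt Real.pi) = Real.pi ^ ((1:ℝ)/4) by
        rw [Real.sqrt_eq_rpow, Real.sqrt_eq_rpow, ← Real.rpow_mul Real.pi_pos.le]; norm_num,
      Real.rpow_neg Real.pi_pos.le, Complex.ofReal_inv]
  rw [hpi, hC]
  show _ * Complex.exp (-((x:ℂ) - t)^2) = _
  rw [mul_assoc, mul_assoc, ← Complex.exp_add, ← Complex.exp_add]
  congr 1
  rw [ht, show z / ((Real.sqrt 2 : ℝ) : ℂ) = ((Real.sqrt 2 : ℝ) : ℂ) * z / 2 from by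
    field_simp
    linear_combination (-z) * hs2sq]
  congr 1
  linear_combination (-(z ^ 2) / 4) * hs2sq
end

section
/- Let A be a positive (semidefinite) invertible 3×3 block matrix with blocks A_{ij} on a direct sum H₁ ⊕ H₂ ⊕ H₃ of finite-dimensional spaces, with A_{22} invertible, and define D = Diag(I, [[A_{22},A_{23}],[A_{32},A_{33}]]), B = Diag([[A_{11},A_{12}],[A_{21},A_{22}]], I), C = Diag(I, A_{22}, I) (as block matrices on H₁⊕H₂⊕H₃). If A⁻¹(I+A) D (I+D)⁻¹ = B⁻¹(I+B) C (I+C)⁻¹, then A_{13} = A_{12} A_{22}⁻¹ A_{23} and A_{13} = A_{12} (A_{22}+I)⁻¹ A_{23}. -/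
open Matrix
open scoped ComplexOrder

variable {n1 n2 n3 : ℕ}

/-- The 3×3 block matrix `A` on `H₁ ⊕ H₂ ⊕ H₃` (grouped as `(H₁ ⊕ H₂) ⊕ H₃`). -/
def blockA (A11 : Matrix (Fin n1) (Fin n1) ℂ) (A12 : Matrix (Fin n1) (Fin n2) ℂ)
    (A13 : Matrix (Fin n1) (Fin n3) ℂ) (A21 : Matrix (Fin n2) (Fin n1) ℂ)
    (A22 : Matrix (Fin n2) (Fin n2) ℂ) (A23 : Matrix (Fin n2) (Fin n3) ℂ)
    (A31 : Matrix (Fin n3) (Fin n1) ℂ) (A32 : Matrix (Fin n3) (Fin n2) ℂ)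
    (A33 : Matrix (Fin n3) (Fin n3) ℂ) :
    Matrix ((Fin n1 ⊕ Fin n2) ⊕ Fin n3) ((Fin n1 ⊕ Fin n2) ⊕ Fin n3) ℂ :=
  fromBlocks (fromBlocks A11 A12 A21 A22) (fromRows A13 A23) (fromCols A31 A32) A33

/-- `D = Diag(I, [[A₂₂,A₂₃],[A₃₂,A₃₃]])`. -/
def blockD (A22 : Matrix (Fin n2) (Fin n2) ℂ) (A23 : Matrix (Fin n2) (Fin n3) ℂ)
    (A32 : Matrix (Fin n3) (Fin n2) ℂ) (A33 : Matrix (Fin n3) (Fin n3) ℂ) :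
    Matrix ((Fin n1 ⊕ Fin n2) ⊕ Fin n3) ((Fin n1 ⊕ Fin n2) ⊕ Fin n3) ℂ :=
  fromBlocks (fromBlocks 1 0 0 A22) (fromRows 0 A23) (fromCols 0 A32) A33

/-- `B = Diag([[A₁₁,A₁₂],[A₂₁,A₂₂]], I)`. -/
def blockB (A11 : Matrix (Fin n1) (Fin n1) ℂ) (A12 : Matrix (Fin n1) (Fin n2) ℂ)
    (A21 : Matrix (Fin n2) (Fin n1) ℂ) (A22 : Matrix (Fin n2) (Fin n2) ℂ) :
    Matrix ((Fin n1 ⊕ Fin n2) ⊕ Fin n3) ((Fin n1 ⊕ Fin n2) ⊕ Fin n3) ℂ :=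
  fromBlocks (fromBlocks A11 A12 A21 A22) 0 0 1

/-- `C = Diag(I, A₂₂, I)`. -/
def blockC (A22 : Matrix (Fin n2) (Fin n2) ℂ) :
    Matrix ((Fin n1 ⊕ Fin n2) ⊕ Fin n3) ((Fin n1 ⊕ Fin n2) ⊕ Fin n3) ℂ :=
  fromBlocks (fromBlocks 1 0 0 A22) 0 0 1

private lemma posDef_submatrix_inj {m n : Type*} [Fintype m] [Fintype n] [DecidableEq n]
    {M : Matrix n n ℂ} (hM : M.PosDef) (e : m → n) (he : Function.Injective e) :
    (M.submatrix e e).PosDef := by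
  classical
  have key : M.submatrix e e =
      ((1 : Matrix n n ℂ).submatrix id e)ᴴ * M * ((1 : Matrix n n ℂ).submatrix id e) := by
    rw [conjTranspose_submatrix, conjTranspose_one]
    conv_lhs => rw [(by simp : M = 1 * M * 1)]
    rw [submatrix_mul (he₂ := Function.bijective_id),
      submatrix_mul (he₂ := Function.bijective_id), submatrix_id_id]
  refine PosDef.of_dotProduct_mulVec_pos (hM.isHermitian.submatrix e) fun x hx => ?_
  rw [key]
  have hQx : (1 : Matrix n n ℂ).submatrix id e *ᵥ x ≠ 0 := by
    intro h
    apply hx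
    funext i
    have := congrFun h (e i)
    simpa [mulVec, dotProduct, one_apply, he.eq_iff] using this
  simpa only [star_mulVec, dotProduct_mulVec, vecMul_vecMul] using hM.dotProduct_mulVec_pos hQx

private lemma posSemidef_fromBlocks_diag {m n : Type*} [Fintype m] [Fintype n]
    {A : Matrix m m ℂ} {D : Matrix n n ℂ} (hA : A.PosSemidef) (hD : D.PosSemidef) :
    (fromBlocks A 0 0 D).PosSemidef := by
  refine posSemidef_iff_dotProduct_mulVec.mpr ⟨?_, ?_⟩
  · show _ = _
    rw [fromBlocks_conjTranspose, hA.1, hD.1, conjTranspose_zero, conjTranspose_zero]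
  · intro x
    have : star x ⬝ᵥ (fromBlocks A 0 0 D) *ᵥ x
        = star (x ∘ Sum.inl) ⬝ᵥ A *ᵥ (x ∘ Sum.inl) + star (x ∘ Sum.inr) ⬝ᵥ D *ᵥ (x ∘ Sum.inr) := by
      simp [fromBlocks_mulVec, dotProduct, Fintype.sum_sum_type]
    rw [this]
    exact add_nonneg ((posSemidef_iff_dotProduct_mulVec.mp hA).2 _) ((posSemidef_iff_dotProduct_mulVec.mp hD).2 _)

private lemma two_halves {k : Type*} [Fintype k] [DecidableEq k] :
    ((1 : Matrix k k ℂ) + 1) * ((2:ℂ)⁻¹ • 1) = 1 := by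
  rw [← two_smul ℂ (1 : Matrix k k ℂ), smul_mul_smul_comm]
  norm_num

/-- If the positive definite block matrix `A` satisfies
`A⁻¹(I+A) D (I+D)⁻¹ = B⁻¹(I+B) C (I+C)⁻¹`, then
`A₁₃ = A₁₂ A₂₂⁻¹ A₂₃` and `A₁₃ = A₁₂ (A₂₂+I)⁻¹ A₂₃`. -/
theorem markov_necessary_condition
    (A11 : Matrix (Fin n1) (Fin n1) ℂ) (A12 : Matrix (Fin n1) (Fin n2) ℂ)
    (A13 : Matrix (Fin n1) (Fin n3) ℂ) (A21 : Matrix (Fin n2) (Fin n1) ℂ)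
    (A22 : Matrix (Fin n2) (Fin n2) ℂ) (A23 : Matrix (Fin n2) (Fin n3) ℂ)
    (A31 : Matrix (Fin n3) (Fin n1) ℂ) (A32 : Matrix (Fin n3) (Fin n2) ℂ)
    (A33 : Matrix (Fin n3) (Fin n3) ℂ)
    (hA : (blockA A11 A12 A13 A21 A22 A23 A31 A32 A33).PosDef)
    (hA22 : IsUnit A22)
    (hmain :
      (blockA A11 A12 A13 A21 A22 A23 A31 A32 A33)⁻¹
          * (1 + blockA A11 A12 A13 A21 A22 A23 A31 A32 A33)
          * blockD (n1 := n1) A22 A23 A32 A33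
          * (1 + blockD (n1 := n1) A22 A23 A32 A33)⁻¹
        = (blockB (n3 := n3) A11 A12 A21 A22)⁻¹
          * (1 + blockB (n3 := n3) A11 A12 A21 A22)
          * blockC (n1 := n1) (n3 := n3) A22
          * (1 + blockC (n1 := n1) (n3 := n3) A22)⁻¹) :
    A13 = A12 * A22⁻¹ * A23 ∧ A13 = A12 * (A22 + 1)⁻¹ * A23 := by
  classical
  set M : Matrix (Fin n1 ⊕ Fin n2) (Fin n1 ⊕ Fin n2) ℂ := fromBlocks A11 A12 A21 A22 with hM_def
  set X : Matrix (Fin n1 ⊕ Fin n2) (Fin n3) ℂ := fromRows A13 A23 with hX_def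
  set Y : Matrix (Fin n3) (Fin n1 ⊕ Fin n2) ℂ := fromCols A31 A32 with hY_def
  set E : Matrix (Fin n1 ⊕ Fin n2) (Fin n1 ⊕ Fin n2) ℂ := fromBlocks 1 0 0 A22 with hE_def
  set P : Matrix (Fin n1 ⊕ Fin n2) (Fin n3) ℂ := fromRows 0 A23 with hP_def
  set Q : Matrix (Fin n3) (Fin n1 ⊕ Fin n2) ℂ := fromCols 0 A32 with hQ_def
  replace hA : (fromBlocks M X Y A33).PosDef := hA
  -- Hermitian components
  have hAH := hA.isHermitian
  have hYX : Yᴴ = X := by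
    have h := hAH
    rw [IsHermitian, fromBlocks_conjTranspose] at h
    have := congrArg toBlocks₁₂ h
    simpa [toBlocks_fromBlocks₁₂] using this
  have hMH : M.IsHermitian := by
    have h := hAH
    rw [IsHermitian, fromBlocks_conjTranspose] at h
    have := congrArg toBlocks₁₁ h
    exact (by simpa [toBlocks_fromBlocks₁₁] using this : Mᴴ = M)
  have h22H : A22ᴴ = A22 := by
    have h := hMH
    rw [IsHermitian, hM_def, fromBlocks_conjTranspose] at h
    have := congrArg toBlocks₂₂ h
    simpa [toBlocks_fromBlocks₂₂] using this
  have h3123 : A31ᴴ = A13 ∧ A32ᴴ = A23 := by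
    have h := hYX
    rw [hY_def, hX_def, conjTranspose_fromCols_eq_fromRows_conjTranspose] at h
    exact fromRows_inj h
  -- positivity facts
  have hMpd : M.PosDef := by
    have h := posDef_submatrix_inj hA
      (Sum.inl : Fin n1 ⊕ Fin n2 → (Fin n1 ⊕ Fin n2) ⊕ Fin n3) Sum.inl_injective
    have e : (fromBlocks M X Y A33).submatrix
        (Sum.inl : Fin n1 ⊕ Fin n2 → (Fin n1 ⊕ Fin n2) ⊕ Fin n3) Sum.inl = M := by
      ext i j; simp
    rwa [e] at h
  have h22sd : A22.PosSemidef := by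
    have h := hA.posSemidef.submatrix
      (fun i : Fin n2 => (Sum.inl (Sum.inr i) : (Fin n1 ⊕ Fin n2) ⊕ Fin n3))
    have e : (fromBlocks M X Y A33).submatrix
        (fun i : Fin n2 => (Sum.inl (Sum.inr i) : (Fin n1 ⊕ Fin n2) ⊕ Fin n3))
        (fun i : Fin n2 => Sum.inl (Sum.inr i)) = A22 := by
      ext i j; simp [hM_def]
    rwa [e] at h
  have hD23sd : (fromBlocks A22 A23 A32 A33).PosSemidef := by
    have h := hA.posSemidef.submatrix
      (Sum.elim (fun i : Fin n2 => (Sum.inl (Sum.inr i) : (Fin n1 ⊕ Fin n2) ⊕ Fin n3)) Sum.inr)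
    have e : (fromBlocks M X Y A33).submatrix
        (Sum.elim (fun i : Fin n2 => (Sum.inl (Sum.inr i) : (Fin n1 ⊕ Fin n2) ⊕ Fin n3)) Sum.inr)
        (Sum.elim (fun i : Fin n2 => Sum.inl (Sum.inr i)) Sum.inr)
        = fromBlocks A22 A23 A32 A33 := by
      ext (i | i) (j | j) <;> simp [hM_def, hX_def, hY_def]
    rwa [e] at h
  have hDsd : (fromBlocks E P Q A33).PosSemidef := by
    have h1 : (fromBlocks (1 : Matrix (Fin n1) (Fin n1) ℂ) 0 0
        (fromBlocks A22 A23 A32 A33)).PosSemidef :=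
      posSemidef_fromBlocks_diag Matrix.PosSemidef.one hD23sd
    have h := h1.submatrix (fun i => Equiv.sumAssoc (Fin n1) (Fin n2) (Fin n3) i)
    have e : (fromBlocks (1 : Matrix (Fin n1) (Fin n1) ℂ) 0 0
          (fromBlocks A22 A23 A32 A33)).submatrix
          (fun i => Equiv.sumAssoc (Fin n1) (Fin n2) (Fin n3) i)
          (fun i => Equiv.sumAssoc (Fin n1) (Fin n2) (Fin n3) i)
        = fromBlocks E P Q A33 := by
      ext (⟨i | i⟩ | i) (⟨j | j⟩ | j) <;>
        simp [hE_def, hP_def, hQ_def, Equiv.sumAssoc]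
    rwa [e] at h
  -- invertibility
  have hApd1 : ((1 : Matrix ((Fin n1 ⊕ Fin n2) ⊕ Fin n3) ((Fin n1 ⊕ Fin n2) ⊕ Fin n3) ℂ)
      + fromBlocks E P Q A33).PosDef :=
    Matrix.PosDef.add_posSemidef Matrix.PosDef.one hDsd
  have hDu : IsUnit ((1 : Matrix ((Fin n1 ⊕ Fin n2) ⊕ Fin n3) ((Fin n1 ⊕ Fin n2) ⊕ Fin n3) ℂ) + fromBlocks E P Q A33) :=
    hApd1.isUnit
  have hMu : IsUnit M := hMpd.isUnit
  have h22'pd : ((1 : Matrix (Fin n2) (Fin n2) ℂ) + A22).PosDef :=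
    Matrix.PosDef.add_posSemidef Matrix.PosDef.one h22sd
  have h22'u : IsUnit ((1 : Matrix (Fin n2) (Fin n2) ℂ) + A22) := h22'pd.isUnit
  have hAu : IsUnit (fromBlocks M X Y A33) := hA.isUnit
  -- explicit inverses
  set Vb : Matrix (Fin n1 ⊕ Fin n2) (Fin n1 ⊕ Fin n2) ℂ :=
    fromBlocks ((2:ℂ)⁻¹ • 1) 0 0 ((1 + A22)⁻¹) with hVb_def
  have h1E : (1 : Matrix (Fin n1 ⊕ Fin n2) (Fin n1 ⊕ Fin n2) ℂ) + E
      = fromBlocks (1 + 1) 0 0 (1 + A22) := by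
    rw [hE_def, ← fromBlocks_one, fromBlocks_add]
    simp
  have hEVb : ((1 : Matrix (Fin n1 ⊕ Fin n2) _ ℂ) + E) * Vb = 1 := by
    rw [h1E, hVb_def, fromBlocks_multiply]
    simp only [Matrix.mul_zero, Matrix.zero_mul, add_zero, zero_add]
    rw [two_halves, mul_nonsing_inv _ ((isUnit_iff_isUnit_det _).mp h22'u), fromBlocks_one]
  have hVbE : Vb * ((1 : Matrix (Fin n1 ⊕ Fin n2) _ ℂ) + E) = 1 := mul_eq_one_comm.mp hEVb
  have hBinv : (fromBlocks M 0 0 (1 : Matrix (Fin n3) (Fin n3) ℂ))⁻¹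
      = fromBlocks M⁻¹ 0 0 1 := by
    rw [inv_fromBlocks_zero₂₁_of_isUnit_iff _ _ _ (by simp [hMu])]
    simp
  have h1C : (1 : Matrix ((Fin n1 ⊕ Fin n2) ⊕ Fin n3) ((Fin n1 ⊕ Fin n2) ⊕ Fin n3) ℂ) + fromBlocks E 0 0 1
      = fromBlocks (1 + E) 0 0 (1 + 1) := by
    rw [← fromBlocks_one, fromBlocks_add]
    simp
  have hCinv : ((1 : Matrix ((Fin n1 ⊕ Fin n2) ⊕ Fin n3) ((Fin n1 ⊕ Fin n2) ⊕ Fin n3) ℂ) + fromBlocks E 0 0 1)⁻¹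
      = fromBlocks Vb 0 0 ((2:ℂ)⁻¹ • 1) := by
    apply inv_eq_right_inv
    rw [h1C, fromBlocks_multiply]
    simp only [Matrix.mul_zero, Matrix.zero_mul, add_zero, zero_add]
    rw [hEVb, two_halves, fromBlocks_one]
  have h1B : (1 : Matrix ((Fin n1 ⊕ Fin n2) ⊕ Fin n3) ((Fin n1 ⊕ Fin n2) ⊕ Fin n3) ℂ) + fromBlocks M 0 0 1
      = fromBlocks (1 + M) 0 0 (1 + 1) := by
    rw [← fromBlocks_one, fromBlocks_add]
    simp
  have h1D : (1 : Matrix ((Fin n1 ⊕ Fin n2) ⊕ Fin n3) ((Fin n1 ⊕ Fin n2) ⊕ Fin n3) ℂ) + fromBlocks E P Q A33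
      = fromBlocks (1 + E) P Q (1 + A33) := by
    rw [← fromBlocks_one, fromBlocks_add]
    simp
  have h1A : (1 : Matrix ((Fin n1 ⊕ Fin n2) ⊕ Fin n3) ((Fin n1 ⊕ Fin n2) ⊕ Fin n3) ℂ) + fromBlocks M X Y A33
      = fromBlocks (1 + M) X Y (1 + A33) := by
    rw [← fromBlocks_one, fromBlocks_add]
    simp
  -- the polynomial form of the main equation
  have hAmul : fromBlocks M X Y A33 * (fromBlocks M X Y A33)⁻¹ = 1 :=
    mul_nonsing_inv _ ((isUnit_iff_isUnit_det _).mp hAu)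
  have hDmul : ((1 : Matrix ((Fin n1 ⊕ Fin n2) ⊕ Fin n3) ((Fin n1 ⊕ Fin n2) ⊕ Fin n3) ℂ)
        + fromBlocks E P Q A33)⁻¹ * (1 + fromBlocks E P Q A33) = 1 :=
    nonsing_inv_mul _ ((isUnit_iff_isUnit_det _).mp hDu)
  have hMmul : M * M⁻¹ = 1 := mul_nonsing_inv _ ((isUnit_iff_isUnit_det _).mp hMu)
  have hMmul' : M⁻¹ * M = 1 := nonsing_inv_mul _ ((isUnit_iff_isUnit_det _).mp hMu)
  have hmain' : (fromBlocks M X Y A33)⁻¹ * (1 + fromBlocks M X Y A33) * fromBlocks E P Q A33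
        * (1 + fromBlocks E P Q A33)⁻¹
      = (fromBlocks M 0 0 1)⁻¹ * (1 + fromBlocks M 0 0 1) * fromBlocks E 0 0 1
        * (1 + fromBlocks E 0 0 1)⁻¹ := hmain
  have hpoly := congrArg (fun Z => fromBlocks M X Y A33 * Z
      * ((1 : Matrix ((Fin n1 ⊕ Fin n2) ⊕ Fin n3) ((Fin n1 ⊕ Fin n2) ⊕ Fin n3) ℂ)
        + fromBlocks E P Q A33)) hmain'
  have lhs_eq : fromBlocks M X Y A33 * ((fromBlocks M X Y A33)⁻¹ * (1 + fromBlocks M X Y A33)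
        * fromBlocks E P Q A33 * (1 + fromBlocks E P Q A33)⁻¹) * (1 + fromBlocks E P Q A33)
      = (1 + fromBlocks M X Y A33) * fromBlocks E P Q A33 := by
    calc fromBlocks M X Y A33 * ((fromBlocks M X Y A33)⁻¹ * (1 + fromBlocks M X Y A33)
          * fromBlocks E P Q A33 * (1 + fromBlocks E P Q A33)⁻¹) * (1 + fromBlocks E P Q A33)
        = (fromBlocks M X Y A33 * (fromBlocks M X Y A33)⁻¹) * ((1 + fromBlocks M X Y A33)
          * (fromBlocks E P Q A33 * ((1 + fromBlocks E P Q A33)⁻¹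
            * (1 + fromBlocks E P Q A33)))) := by
          simp only [mul_assoc]
      _ = (1 + fromBlocks M X Y A33) * fromBlocks E P Q A33 := by
          rw [hAmul, hDmul, one_mul, mul_one]
  rw [lhs_eq] at hpoly
  -- compute the right-hand side explicitly
  have hG : (fromBlocks M 0 0 (1 : Matrix (Fin n3) (Fin n3) ℂ))⁻¹ * (1 + fromBlocks M 0 0 1)
        * fromBlocks E 0 0 1 * (1 + fromBlocks E 0 0 1)⁻¹
      = fromBlocks (M⁻¹ * (1 + M) * E * Vb) 0 0 1 := by
    rw [hBinv, h1B, hCinv, fromBlocks_multiply, fromBlocks_multiply, fromBlocks_multiply]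
    simp only [Matrix.mul_zero, Matrix.zero_mul, add_zero, zero_add, Matrix.mul_one,
      Matrix.one_mul]
    rw [two_halves]
  rw [hG] at hpoly
  have hMM : M * (M⁻¹ * (1 + M) * E * Vb) = (1 + M) * E * Vb := by
    calc M * (M⁻¹ * (1 + M) * E * Vb) = (M * M⁻¹) * ((1 + M) * (E * Vb)) := by
          simp only [mul_assoc]
      _ = (1 + M) * E * Vb := by rw [hMmul, one_mul, mul_assoc]
  have hAG : fromBlocks M X Y A33 * fromBlocks (M⁻¹ * (1 + M) * E * Vb) 0 0 1
      = fromBlocks ((1 + M) * E * Vb) X (Y * (M⁻¹ * (1 + M) * E * Vb)) A33 := by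
    rw [fromBlocks_multiply]
    simp only [Matrix.mul_zero, Matrix.mul_one, add_zero, zero_add]
    rw [hMM]
  rw [hAG, h1D, fromBlocks_multiply] at hpoly
  rw [h1A, fromBlocks_multiply] at hpoly
  -- extract the two relevant block equations
  have h12 : (1 + M) * P + X * A33 = (1 + M) * E * Vb * P + X * (1 + A33) := by
    have := congrArg toBlocks₁₂ hpoly
    simpa [toBlocks_fromBlocks₁₂] using this
  have h21 : Y * E + (1 + A33) * Q
      = Y * (M⁻¹ * (1 + M) * E * Vb) * (1 + E) + A33 * Q := by
    have := congrArg toBlocks₂₁ hpoly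
    simpa [toBlocks_fromBlocks₂₁] using this
  -- conclusion 2 from the (1,2) block
  have hEVb' : E * Vb = 1 - Vb := by
    have h : Vb + E * Vb = 1 := by rw [← hEVb, add_mul, one_mul]
    exact eq_sub_of_add_eq' h
  have hE1 : (1 + M) * E * Vb * P = (1 + M) * P - (1 + M) * (Vb * P) := by
    calc (1 + M) * E * Vb * P = (1 + M) * ((E * Vb) * P) := by simp only [Matrix.mul_assoc]
      _ = (1 + M) * ((1 - Vb) * P) := by rw [hEVb']
      _ = (1 + M) * P - (1 + M) * (Vb * P) := by rw [Matrix.sub_mul, Matrix.one_mul, Matrix.mul_sub]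
  have hXeq : X = (1 + M) * (Vb * P) := by
    have h := h12
    rw [hE1, Matrix.mul_add, Matrix.mul_one] at h
    have h2 : (1 + M) * P + X * A33
        - ((1 + M) * P - (1 + M) * (Vb * P) + (X + X * A33)) = 0 := sub_eq_zero.mpr h
    have h3 : (1 + M) * (Vb * P) - X = 0 := by rw [← h2]; abel
    exact (sub_eq_zero.mp h3).symm
  have hVbP : Vb * P = fromRows 0 ((1 + A22)⁻¹ * A23) := by
    rw [hVb_def, hP_def, fromBlocks_mul_fromRows]
    simp
  have h1M : (1 : Matrix (Fin n1 ⊕ Fin n2) (Fin n1 ⊕ Fin n2) ℂ) + M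
      = fromBlocks (1 + A11) A12 A21 (1 + A22) := by
    rw [hM_def, ← fromBlocks_one, fromBlocks_add]
    simp
  have hX2 : fromRows A13 A23 = fromRows (A12 * ((1 + A22)⁻¹ * A23))
      ((1 + A22) * ((1 + A22)⁻¹ * A23)) := by
    rw [← hX_def, hXeq, hVbP, h1M, fromBlocks_mul_fromRows]
    simp
  have conc2 : A13 = A12 * ((1 + A22)⁻¹ * A23) := ((fromRows_inj hX2)).1
  -- conclusion 1 from the (2,1) block
  have hMinv1 : M⁻¹ * (1 + M) = M⁻¹ + 1 := by rw [mul_add, mul_one, hMmul']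
  have hYterm : Y * (M⁻¹ * (1 + M) * E * Vb) * (1 + E) = Y * (M⁻¹ * E) + Y * E := by
    calc Y * (M⁻¹ * (1 + M) * E * Vb) * (1 + E)
        = Y * ((M⁻¹ * (1 + M)) * (E * (Vb * (1 + E)))) := by simp only [Matrix.mul_assoc]
      _ = Y * ((M⁻¹ + 1) * E) := by rw [hVbE, mul_one, hMinv1]
      _ = Y * (M⁻¹ * E) + Y * E := by rw [Matrix.add_mul, Matrix.one_mul, Matrix.mul_add]
  have hQeq : Q = Y * (M⁻¹ * E) := by
    have h := h21
    rw [hYterm, Matrix.add_mul, Matrix.one_mul] at h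
    have h2 : Y * E + (Q + A33 * Q)
        - (Y * (M⁻¹ * E) + Y * E + A33 * Q) = 0 := sub_eq_zero.mpr h
    have h3 : Q - Y * (M⁻¹ * E) = 0 := by rw [← h2]; abel
    exact sub_eq_zero.mp h3
  have hMinvH : (M⁻¹)ᴴ = M⁻¹ := hMH.inv
  have hEH : Eᴴ = E := by
    rw [hE_def, fromBlocks_conjTranspose, conjTranspose_zero, conjTranspose_zero,
      conjTranspose_one, h22H]
  have hQP : Qᴴ = P := by
    rw [hQ_def, hP_def, conjTranspose_fromCols_eq_fromRows_conjTranspose,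
      conjTranspose_zero, h3123.2]
  have hPE : E * (M⁻¹ * X) = P := by
    have h := congrArg conjTranspose hQeq
    rw [hQP, conjTranspose_mul, conjTranspose_mul, hEH, hMinvH, hYX] at h
    rw [Matrix.mul_assoc] at h
    exact h.symm
  have hWX : M⁻¹ * X = fromRows (M⁻¹ * X).toRows₁ (M⁻¹ * X).toRows₂ := (fromRows_toRows _).symm
  have hEWX : E * (M⁻¹ * X) = fromRows ((M⁻¹ * X).toRows₁) (A22 * (M⁻¹ * X).toRows₂) := by
    conv_lhs => rw [hWX, hE_def]
    rw [fromBlocks_mul_fromRows]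
    simp
  have hr : (M⁻¹ * X).toRows₁ = 0 ∧ A22 * (M⁻¹ * X).toRows₂ = A23 :=
    fromRows_inj (by rw [← hEWX, hPE, hP_def])
  have hR2 : (M⁻¹ * X).toRows₂ = A22⁻¹ * A23 := by
    have h := congrArg (fun Z => A22⁻¹ * Z) hr.2
    rwa [← Matrix.mul_assoc, nonsing_inv_mul _ ((isUnit_iff_isUnit_det _).mp hA22), Matrix.one_mul] at h
  have hXM : X = M * (M⁻¹ * X) := by rw [← Matrix.mul_assoc, hMmul, Matrix.one_mul]
  rw [hWX, hr.1, hR2] at hXM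
  rw [hM_def, fromBlocks_mul_fromRows] at hXM
  have hX3 : fromRows A13 A23 = fromRows (A12 * (A22⁻¹ * A23))
      (A22 * (A22⁻¹ * A23)) := by
    rw [← hX_def, hXM]
    simp
  have conc1 : A13 = A12 * (A22⁻¹ * A23) := ((fromRows_inj hX3)).1
  exact ⟨by rw [conc1, Matrix.mul_assoc], by rw [conc2, Matrix.mul_assoc, add_comm A22 1]⟩
end

section
/- Let A be an invertible positive definite 3×3 block matrix with blocks A_{ij}, and suppose its inverse X = A⁻¹ has X_{13} = 0. Then X_{11} = (A_{11} − A_{12} A_{22}⁻¹ A_{21})⁻¹ and X_{33} = (A_{33} − A_{32} A_{22}⁻¹ A_{23})⁻¹, assuming A_{22}, A_{11} − A_{12}A_{22}⁻¹A_{21}, and A_{33} − A_{32}A_{22}⁻¹A_{23} are invertible and A_{13} = A_{12} A_{22}⁻¹ A_{23}. -/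
open Matrix
open scoped ComplexOrder

variable {n1 n2 n3 : ℕ}

lemma fromRows_add' {m₁ m₂ n : Type*} (A₁ B₁ : Matrix m₁ n ℂ) (A₂ B₂ : Matrix m₂ n ℂ) :
    fromRows A₁ A₂ + fromRows B₁ B₂ = fromRows (A₁ + B₁) (A₂ + B₂) := by
  ext (i | i) j <;> simp

lemma fromColumns_add' {m n₁ n₂ : Type*} (A₁ B₁ : Matrix m n₁ ℂ) (A₂ B₂ : Matrix m n₂ ℂ) :
    fromCols A₁ A₂ + fromCols B₁ B₂ = fromCols (A₁ + B₁) (A₂ + B₂) := by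
  ext i (j | j) <;> simp

/-- For a positive definite 3×3 block matrix `A` whose inverse `X = A⁻¹` has vanishing
`(1,3)` block (equivalently `A₁₃ = A₁₂ A₂₂⁻¹ A₂₃`), the corner blocks of `X` are the
inverse Schur complements: `X₁₁ = (A₁₁ − A₁₂A₂₂⁻¹A₂₁)⁻¹` and
`X₃₃ = (A₃₃ − A₃₂A₂₂⁻¹A₂₃)⁻¹`. -/
theorem inverse_corner_blocks
    (A11 : Matrix (Fin n1) (Fin n1) ℂ) (A12 : Matrix (Fin n1) (Fin n2) ℂ)
    (A13 : Matrix (Fin n1) (Fin n3) ℂ) (A21 : Matrix (Fin n2) (Fin n1) ℂ)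
    (A22 : Matrix (Fin n2) (Fin n2) ℂ) (A23 : Matrix (Fin n2) (Fin n3) ℂ)
    (A31 : Matrix (Fin n3) (Fin n1) ℂ) (A32 : Matrix (Fin n3) (Fin n2) ℂ)
    (A33 : Matrix (Fin n3) (Fin n3) ℂ)
    (hA : (blockA A11 A12 A13 A21 A22 A23 A31 A32 A33).PosDef)
    (hA22 : IsUnit A22)
    (hS1 : IsUnit (A11 - A12 * A22⁻¹ * A21))
    (hS3 : IsUnit (A33 - A32 * A22⁻¹ * A23))
    (h13 : A13 = A12 * A22⁻¹ * A23)
    (hX13 : (Matrix.of fun (i : Fin n1) (j : Fin n3) =>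
        (blockA A11 A12 A13 A21 A22 A23 A31 A32 A33)⁻¹ (Sum.inl (Sum.inl i)) (Sum.inr j))
      = 0) :
    (Matrix.of fun (i : Fin n1) (j : Fin n1) =>
        (blockA A11 A12 A13 A21 A22 A23 A31 A32 A33)⁻¹ (Sum.inl (Sum.inl i))
          (Sum.inl (Sum.inl j)))
      = (A11 - A12 * A22⁻¹ * A21)⁻¹ ∧
    (Matrix.of fun (i : Fin n3) (j : Fin n3) =>
        (blockA A11 A12 A13 A21 A22 A23 A31 A32 A33)⁻¹ (Sum.inr i) (Sum.inr j))
      = (A33 - A32 * A22⁻¹ * A23)⁻¹ := by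
  subst h13
  have h22r : A22 * A22⁻¹ = 1 := mul_nonsing_inv _ ((isUnit_iff_isUnit_det _).mp hA22)
  have hS1r : (A11 - A12 * A22⁻¹ * A21) * (A11 - A12 * A22⁻¹ * A21)⁻¹ = 1 :=
    mul_nonsing_inv _ ((isUnit_iff_isUnit_det _).mp hS1)
  have hS3r : (A33 - A32 * A22⁻¹ * A23) * (A33 - A32 * A22⁻¹ * A23)⁻¹ = 1 :=
    mul_nonsing_inv _ ((isUnit_iff_isUnit_det _).mp hS3)
  have hH := hA.1
  rw [blockA, IsHermitian, fromBlocks_conjTranspose, fromBlocks_conjTranspose,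
      conjTranspose_fromRows_eq_fromCols_conjTranspose,
      conjTranspose_fromCols_eq_fromRows_conjTranspose] at hH
  obtain ⟨h1, h2, h3, h4⟩ := fromBlocks_inj.mp hH
  obtain ⟨hh11, hh12, hh21, hh22⟩ := fromBlocks_inj.mp h1
  obtain ⟨hr1, hr2⟩ := fromRows_inj h2
  have hA23 : A23ᴴ = A32 := by rw [← hr2, conjTranspose_conjTranspose]
  have h31 : A31 = A32 * A22⁻¹ * A21 := by
    have e : A31 = (A12 * A22⁻¹ * A23)ᴴ := by
      rw [← hr1, conjTranspose_conjTranspose]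
    rw [e, conjTranspose_mul, conjTranspose_mul, conjTranspose_nonsing_inv, hh22, hA23, hh21,
      Matrix.mul_assoc]
  subst h31
  set S1i := (A11 - A12 * A22⁻¹ * A21)⁻¹ with hS1i
  set S3i := (A33 - A32 * A22⁻¹ * A23)⁻¹ with hS3i
  have key : blockA A11 A12 (A12 * A22⁻¹ * A23) A21 A22 A23 (A32 * A22⁻¹ * A21) A32 A33 *
      blockA S1i (-(S1i * A12 * A22⁻¹)) 0 (-(A22⁻¹ * A21 * S1i))
        (A22⁻¹ + A22⁻¹ * A21 * S1i * A12 * A22⁻¹ + A22⁻¹ * A23 * S3i * A32 * A22⁻¹)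
        (-(A22⁻¹ * A23 * S3i)) 0 (-(S3i * A32 * A22⁻¹)) S3i = 1 := by
    have step : blockA A11 A12 (A12 * A22⁻¹ * A23) A21 A22 A23 (A32 * A22⁻¹ * A21) A32 A33 *
        blockA S1i (-(S1i * A12 * A22⁻¹)) 0 (-(A22⁻¹ * A21 * S1i))
          (A22⁻¹ + A22⁻¹ * A21 * S1i * A12 * A22⁻¹ + A22⁻¹ * A23 * S3i * A32 * A22⁻¹)
          (-(A22⁻¹ * A23 * S3i)) 0 (-(S3i * A32 * A22⁻¹)) S3i =
        fromBlocks (fromBlocks 1 0 0 1) (fromRows 0 0) (fromCols 0 0) 1 := by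
      rw [blockA, blockA, fromBlocks_multiply, fromBlocks_multiply,
          fromRows_mul_fromCols, fromBlocks_mul_fromRows, fromRows_mul,
          fromCols_mul_fromBlocks, mul_fromCols, fromCols_mul_fromRows,
          fromBlocks_add, fromRows_add', fromColumns_add']
      refine fromBlocks_inj.mpr ⟨fromBlocks_inj.mpr ⟨?_, ?_, ?_, ?_⟩,
        (fromRows_ext_iff _ _ _ _).mpr ⟨?_, ?_⟩, (fromCols_ext_iff _ _ _ _).mpr ⟨?_, ?_⟩, ?_⟩
      · -- (1,1),(1,1)
        trans ((A11 - A12 * A22⁻¹ * A21) * S1i)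
        · simp only [Matrix.neg_mul, Matrix.mul_neg, neg_neg, Matrix.mul_zero, Matrix.zero_mul,
            Matrix.mul_add, Matrix.add_mul, Matrix.mul_sub, Matrix.sub_mul, Matrix.mul_assoc,
            add_zero, zero_add, Matrix.mul_one, Matrix.one_mul]
          abel
        · rw [hS1r]
      · -- (1,1),(1,2)
        trans (A12 * A22⁻¹ - ((A11 - A12 * A22⁻¹ * A21) * S1i) * (A12 * A22⁻¹))
        · simp only [Matrix.neg_mul, Matrix.mul_neg, neg_neg, Matrix.mul_zero, Matrix.zero_mul,
            Matrix.mul_add, Matrix.add_mul, Matrix.mul_sub, Matrix.sub_mul, Matrix.mul_assoc,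
            add_zero, zero_add, Matrix.mul_one, Matrix.one_mul]
          abel
        · rw [hS1r, Matrix.one_mul, sub_self]
      · -- (1,1),(2,1)
        trans (A21 * S1i - (A22 * A22⁻¹) * (A21 * S1i))
        · simp only [Matrix.neg_mul, Matrix.mul_neg, neg_neg, Matrix.mul_zero, Matrix.zero_mul,
            Matrix.mul_add, Matrix.add_mul, Matrix.mul_sub, Matrix.sub_mul, Matrix.mul_assoc,
            add_zero, zero_add, Matrix.mul_one, Matrix.one_mul]
          abel
        · rw [h22r, Matrix.one_mul, sub_self]
      · -- (1,1),(2,2)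
        trans (A22 * A22⁻¹ + ((A22 * A22⁻¹) * (A21 * (S1i * (A12 * A22⁻¹)))
            - A21 * (S1i * (A12 * A22⁻¹)))
            + ((A22 * A22⁻¹) * (A23 * (S3i * (A32 * A22⁻¹)))
            - A23 * (S3i * (A32 * A22⁻¹))))
        · simp only [Matrix.neg_mul, Matrix.mul_neg, neg_neg, Matrix.mul_zero, Matrix.zero_mul,
            Matrix.mul_add, Matrix.add_mul, Matrix.mul_sub, Matrix.sub_mul, Matrix.mul_assoc,
            add_zero, zero_add, Matrix.mul_one, Matrix.one_mul]
          abel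
        · rw [h22r]
          simp [Matrix.one_mul]
      · -- (1,2) top
        simp only [Matrix.neg_mul, Matrix.mul_neg, neg_neg, Matrix.mul_zero, Matrix.zero_mul,
          Matrix.mul_add, Matrix.add_mul, Matrix.mul_sub, Matrix.sub_mul, Matrix.mul_assoc,
          add_zero, zero_add, Matrix.mul_one, Matrix.one_mul]
        abel
      · -- (1,2) bottom
        trans (A23 * S3i - (A22 * A22⁻¹) * (A23 * S3i))
        · simp only [Matrix.neg_mul, Matrix.mul_neg, neg_neg, Matrix.mul_zero, Matrix.zero_mul,
            Matrix.mul_add, Matrix.add_mul, Matrix.mul_sub, Matrix.sub_mul, Matrix.mul_assoc,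
            add_zero, zero_add, Matrix.mul_one, Matrix.one_mul]
          abel
        · rw [h22r, Matrix.one_mul, sub_self]
      · -- (2,1) left
        simp only [Matrix.neg_mul, Matrix.mul_neg, neg_neg, Matrix.mul_zero, Matrix.zero_mul,
          Matrix.mul_add, Matrix.add_mul, Matrix.mul_sub, Matrix.sub_mul, Matrix.mul_assoc,
          add_zero, zero_add, Matrix.mul_one, Matrix.one_mul]
        abel
      · -- (2,1) right
        trans (A32 * A22⁻¹ - ((A33 - A32 * A22⁻¹ * A23) * S3i) * (A32 * A22⁻¹))
        · simp only [Matrix.neg_mul, Matrix.mul_neg, neg_neg, Matrix.mul_zero, Matrix.zero_mul,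
            Matrix.mul_add, Matrix.add_mul, Matrix.mul_sub, Matrix.sub_mul, Matrix.mul_assoc,
            add_zero, zero_add, Matrix.mul_one, Matrix.one_mul]
          abel
        · rw [hS3r, Matrix.one_mul, sub_self]
      · -- (2,2)
        trans ((A33 - A32 * A22⁻¹ * A23) * S3i)
        · simp only [Matrix.neg_mul, Matrix.mul_neg, neg_neg, Matrix.mul_zero, Matrix.zero_mul,
            Matrix.mul_add, Matrix.add_mul, Matrix.mul_sub, Matrix.sub_mul, Matrix.mul_assoc,
            add_zero, zero_add, Matrix.mul_one, Matrix.one_mul]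
          abel
        · rw [hS3r]
    rw [step]
    simp [fromBlocks_one]
  have hXinv := inv_eq_right_inv key
  constructor
  · ext i j
    simp only [Matrix.of_apply]
    rw [hXinv]
    simp [blockA]
  · ext i j
    simp only [Matrix.of_apply]
    rw [hXinv]
    simp [blockA]
end

section
/- Suppose A is a block matrix on H₁ ⊕ H₂ ⊕ H₃ that is block diagonal with respect to a decomposition H₂ = K_a ⊕ K_b, of the form A = Diag(A₁, A₂) where A₁ = [[A_{11}, a],[a*, c]] acts on H₁ ⊕ K_a and A₂ = [[d, b],[b*, A_{33}]] acts on K_b ⊕ H₃ (so A_{13} = 0, A_{12} = [a 0], A_{23} = [0; b], A_{22} = Diag(c, d)). Then for any two functions f, g with f·g = 1 (applied via functional calculus to positive definite matrices), f(A) g(D) = f(B) g(C), where D = Diag(I, [[A_{22},A_{23}],[A_{32},A_{33}]]), B = Diag([[A_{11},A_{12}],[A_{21},A_{22}]], I), C = Diag(I, A_{22}, I). -/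
open Matrix
open scoped ComplexOrder

section AuxLemmas

variable {p q : Type*} [Fintype p] [Fintype q] [DecidableEq p] [DecidableEq q]

lemma continuousOn_spectrum_matrix (f : ℝ → ℝ) (M : Matrix p p ℂ) :
    ContinuousOn f (spectrum ℝ M) := by
  have : Finite (spectrum ℝ M) := M.finite_real_spectrum
  rw [continuousOn_iff_continuous_restrict]
  exact continuous_of_discreteTopology

lemma isUnit_fromBlocks_diag_iff (X : Matrix p p ℂ) (Y : Matrix q q ℂ) :
    IsUnit (fromBlocks X 0 0 Y) ↔ IsUnit X ∧ IsUnit Y := by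
  rw [Matrix.isUnit_iff_isUnit_det, Matrix.isUnit_iff_isUnit_det X,
    Matrix.isUnit_iff_isUnit_det Y, Matrix.det_fromBlocks_zero₂₁, IsUnit.mul_iff]

lemma algebraMap_eq_fromBlocks (r : ℝ) :
    (algebraMap ℝ (Matrix (p ⊕ q) (p ⊕ q) ℂ) r)
      = fromBlocks (algebraMap ℝ (Matrix p p ℂ) r) 0 0 (algebraMap ℝ (Matrix q q ℂ) r) := by
  rw [Algebra.algebraMap_eq_smul_one, Algebra.algebraMap_eq_smul_one,
    Algebra.algebraMap_eq_smul_one, ← fromBlocks_one, fromBlocks_smul, smul_zero, smul_zero]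

lemma spectrum_fromBlocks_diag (X : Matrix p p ℂ) (Y : Matrix q q ℂ) :
    spectrum ℝ (fromBlocks X 0 0 Y) = spectrum ℝ X ∪ spectrum ℝ Y := by
  ext z
  have h : algebraMap ℝ (Matrix (p ⊕ q) (p ⊕ q) ℂ) z - fromBlocks X 0 0 Y
      = fromBlocks (algebraMap ℝ (Matrix p p ℂ) z - X) 0 0
          (algebraMap ℝ (Matrix q q ℂ) z - Y) := by
    rw [algebraMap_eq_fromBlocks, sub_eq_add_neg, fromBlocks_neg, fromBlocks_add]
    simp [sub_eq_add_neg]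
  simp only [spectrum.mem_iff, Set.mem_union, h, isUnit_fromBlocks_diag_iff, not_and_or]

lemma isSelfAdjoint_fromBlocks_diag {X : Matrix p p ℂ} {Y : Matrix q q ℂ}
    (hX : IsSelfAdjoint X) (hY : IsSelfAdjoint Y) :
    IsSelfAdjoint (fromBlocks X 0 0 Y) := by
  rw [isSelfAdjoint_iff, star_eq_conjTranspose, fromBlocks_conjTranspose,
    conjTranspose_zero, conjTranspose_zero, ← star_eq_conjTranspose, ← star_eq_conjTranspose,
    hX.star_eq, hY.star_eq]

/-- Functions of block-diagonal matrices act blockwise. -/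
lemma cfc_fromBlocks_diag (X : Matrix p p ℂ) (Y : Matrix q q ℂ)
    (hX : IsSelfAdjoint X) (hY : IsSelfAdjoint Y) (f : ℝ → ℝ) :
    cfc f (fromBlocks X 0 0 Y) = fromBlocks (cfc f X) 0 0 (cfc f Y) := by
  have hM : IsSelfAdjoint (fromBlocks X 0 0 Y) := isSelfAdjoint_fromBlocks_diag hX hY
  set M : Matrix (p ⊕ q) (p ⊕ q) ℂ := fromBlocks X 0 0 Y with hMdef
  have hsX : spectrum ℝ X ⊆ spectrum ℝ M := by
    rw [hMdef, spectrum_fromBlocks_diag]; exact Set.subset_union_left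
  have hsY : spectrum ℝ Y ⊆ spectrum ℝ M := by
    rw [hMdef, spectrum_fromBlocks_diag]; exact Set.subset_union_right
  let ιX : C(spectrum ℝ X, spectrum ℝ M) := ⟨Set.inclusion hsX, continuous_id.subtype_map hsX⟩
  let ιY : C(spectrum ℝ Y, spectrum ℝ M) := ⟨Set.inclusion hsY, continuous_id.subtype_map hsY⟩
  let Ψ : C(spectrum ℝ M, ℝ) →⋆ₐ[ℝ] Matrix (p ⊕ q) (p ⊕ q) ℂ :=
    { toFun := fun h => fromBlocks (cfcHom hX (h.comp ιX)) 0 0 (cfcHom hY (h.comp ιY))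
      map_one' := by
        have e1 : (1 : C(spectrum ℝ M, ℝ)).comp ιX = 1 := rfl
        have e2 : (1 : C(spectrum ℝ M, ℝ)).comp ιY = 1 := rfl
        rw [e1, e2, _root_.map_one, _root_.map_one, fromBlocks_one]
      map_mul' := fun h₁ h₂ => by
        have e1 : (h₁ * h₂).comp ιX = h₁.comp ιX * h₂.comp ιX := rfl
        have e2 : (h₁ * h₂).comp ιY = h₁.comp ιY * h₂.comp ιY := rfl
        rw [e1, e2, _root_.map_mul, _root_.map_mul, fromBlocks_multiply]
        simp
      map_zero' := by
        have e1 : (0 : C(spectrum ℝ M, ℝ)).comp ιX = 0 := rfl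
        have e2 : (0 : C(spectrum ℝ M, ℝ)).comp ιY = 0 := rfl
        rw [e1, e2, _root_.map_zero, _root_.map_zero, fromBlocks_zero]
      map_add' := fun h₁ h₂ => by
        have e1 : (h₁ + h₂).comp ιX = h₁.comp ιX + h₂.comp ιX := rfl
        have e2 : (h₁ + h₂).comp ιY = h₁.comp ιY + h₂.comp ιY := rfl
        rw [e1, e2, _root_.map_add, _root_.map_add, fromBlocks_add]
        simp
      commutes' := fun r => by
        have e1 : (algebraMap ℝ C(spectrum ℝ M, ℝ) r).comp ιX
            = algebraMap ℝ C(spectrum ℝ X, ℝ) r := rfl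
        have e2 : (algebraMap ℝ C(spectrum ℝ M, ℝ) r).comp ιY
            = algebraMap ℝ C(spectrum ℝ Y, ℝ) r := rfl
        simp only [e1, e2, AlgHomClass.commutes]
        rw [algebraMap_eq_fromBlocks]
      map_star' := fun h => by
        have e1 : (star h).comp ιX = star (h.comp ιX) := rfl
        have e2 : (star h).comp ιY = star (h.comp ιY) := rfl
        rw [e1, e2, map_star, map_star, star_eq_conjTranspose,
          star_eq_conjTranspose, star_eq_conjTranspose, fromBlocks_conjTranspose,
          conjTranspose_zero, conjTranspose_zero] }
  have hΨc : Continuous Ψ := by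
    apply continuous_matrix
    rintro (i | i) (j | j)
    · show Continuous fun h : C(spectrum ℝ M, ℝ) => (cfcHom hX (h.comp ιX)) i j
      exact ((continuous_apply j).comp (continuous_apply i)).comp
        ((cfcHom_isClosedEmbedding hX).continuous.comp (ContinuousMap.continuous_precomp ιX))
    · exact continuous_const
    · exact continuous_const
    · show Continuous fun h : C(spectrum ℝ M, ℝ) => (cfcHom hY (h.comp ιY)) i j
      exact ((continuous_apply j).comp (continuous_apply i)).comp
        ((cfcHom_isClosedEmbedding hY).continuous.comp (ContinuousMap.continuous_precomp ιY))
  have hΨid : Ψ ((ContinuousMap.id ℝ).restrict <| spectrum ℝ M) = M := by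
    show fromBlocks (cfcHom hX _) 0 0 (cfcHom hY _) = M
    have e1 : ((ContinuousMap.id ℝ).restrict (spectrum ℝ M)).comp ιX
        = (ContinuousMap.id ℝ).restrict (spectrum ℝ X) := rfl
    have e2 : ((ContinuousMap.id ℝ).restrict (spectrum ℝ M)).comp ιY
        = (ContinuousMap.id ℝ).restrict (spectrum ℝ Y) := rfl
    rw [e1, e2, cfcHom_id hX, cfcHom_id hY]
  have key : cfcHom hM = Ψ := cfcHom_eq_of_continuous_of_map_id hM Ψ hΨc hΨid
  rw [cfc_apply f M hM (continuousOn_spectrum_matrix f M),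
    cfc_apply f X hX (continuousOn_spectrum_matrix f X),
    cfc_apply f Y hY (continuousOn_spectrum_matrix f Y), key]
  show fromBlocks (cfcHom hX _) 0 0 (cfcHom hY _) = fromBlocks (cfcHom hX _) 0 0 (cfcHom hY _)
  refine congrArg₂ (fun P Q => fromBlocks P 0 0 Q) ?_ ?_
  · exact congrArg (cfcHom hX) (by ext x; rfl)
  · exact congrArg (cfcHom hY) (by ext x; rfl)

lemma star_sum_elim {u : p → ℂ} {v : q → ℂ} :
    star (Sum.elim u v) = Sum.elim (star u) (star v) := by
  funext i; cases i <;> rfl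

lemma posDef_fromBlocks_diag {X : Matrix p p ℂ} {Y : Matrix q q ℂ}
    (hX : X.PosDef) (hY : Y.PosDef) : (fromBlocks X 0 0 Y).PosDef := by
  refine Matrix.PosDef.of_dotProduct_mulVec_pos (isSelfAdjoint_fromBlocks_diag hX.1 hY.1) fun x hx => ?_
  have hx' : x = Sum.elim (x ∘ Sum.inl) (x ∘ Sum.inr) := (Sum.elim_comp_inl_inr x).symm
  set u := x ∘ Sum.inl
  set v := x ∘ Sum.inr
  rw [hx', star_sum_elim, fromBlocks_mulVec]
  simp only [Matrix.zero_mulVec, add_zero, zero_add, sumElim_dotProduct_sumElim]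
  have huv : u ≠ 0 ∨ v ≠ 0 := by
    by_contra hc
    push_neg at hc
    apply hx
    rw [hx', hc.1, hc.2]
    funext i; cases i <;> rfl
  have h1 : 0 ≤ star u ⬝ᵥ X *ᵥ u := by
    rcases eq_or_ne u 0 with h | h
    · simp [h]
    · exact (hX.dotProduct_mulVec_pos h).le
  have h2 : 0 ≤ star v ⬝ᵥ Y *ᵥ v := by
    rcases eq_or_ne v 0 with h | h
    · simp [h]
    · exact (hY.dotProduct_mulVec_pos h).le
  rcases huv with h | h
  · exact add_pos_of_pos_of_nonneg (hX.dotProduct_mulVec_pos h) h2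
  · exact add_pos_of_nonneg_of_pos h1 (hY.dotProduct_mulVec_pos h)

lemma posDef_of_fromBlocks₁₁ {X : Matrix p p ℂ} {B : Matrix p q ℂ} {C : Matrix q p ℂ}
    {Y : Matrix q q ℂ} (h : (fromBlocks X B C Y).PosDef) : X.PosDef := by
  refine Matrix.PosDef.of_dotProduct_mulVec_pos ?_ ?_
  · have h1 : (fromBlocks X B C Y)ᴴ = fromBlocks X B C Y := h.1
    rw [fromBlocks_conjTranspose] at h1
    have := congrArg Matrix.toBlocks₁₁ h1
    exact (by simpa using this : Xᴴ = X)
  · intro x hx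
    have hne : Sum.elim x (0 : q → ℂ) ≠ 0 := by
      intro hc
      apply hx
      funext i
      exact congrFun hc (Sum.inl i)
    have := h.dotProduct_mulVec_pos hne
    rw [star_sum_elim, fromBlocks_mulVec] at this
    simpa using this

lemma posDef_of_fromBlocks₂₂ {X : Matrix p p ℂ} {B : Matrix p q ℂ} {C : Matrix q p ℂ}
    {Y : Matrix q q ℂ} (h : (fromBlocks X B C Y).PosDef) : Y.PosDef := by
  refine Matrix.PosDef.of_dotProduct_mulVec_pos ?_ ?_
  · have h1 : (fromBlocks X B C Y)ᴴ = fromBlocks X B C Y := h.1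
    rw [fromBlocks_conjTranspose] at h1
    have := congrArg Matrix.toBlocks₂₂ h1
    exact (by simpa using this : Yᴴ = Y)
  · intro x hx
    have hne : Sum.elim (0 : p → ℂ) x ≠ 0 := by
      intro hc
      apply hx
      funext i
      exact congrFun hc (Sum.inr i)
    have := h.dotProduct_mulVec_pos hne
    rw [star_sum_elim, fromBlocks_mulVec] at this
    simpa using this

lemma posDef_spectrum_subset_Ioi {M : Matrix p p ℂ} (hM : M.PosDef) :
    spectrum ℝ M ⊆ Set.Ioi 0 := by
  rw [Matrix.IsHermitian.spectrum_real_eq_range_eigenvalues hM.1]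
  rintro - ⟨i, rfl⟩
  exact hM.eigenvalues_pos i

lemma cfc_mul_cfc_eq_one {M : Matrix p p ℂ} (hM : M.PosDef) (f g : ℝ → ℝ)
    (hfg : ∀ x > (0 : ℝ), f x * g x = 1) : cfc f M * cfc g M = 1 := by
  have hsa : IsSelfAdjoint M := hM.1
  rw [← cfc_mul f g M (continuousOn_spectrum_matrix f M) (continuousOn_spectrum_matrix g M)]
  have h1 : cfc (fun x => f x * g x) M = cfc (1 : ℝ → ℝ) M := by
    apply cfc_congr
    intro x hx
    exact hfg x (posDef_spectrum_subset_Ioi hM hx)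
  rw [h1, cfc_one ℝ M]

end AuxLemmas

variable {n1 ka kb n3 : ℕ}

/-- The block-diagonal matrix `A = Diag(A₁, A₂)` on `(H₁ ⊕ K_a) ⊕ (K_b ⊕ H₃)`, where
`A₁ = [[A₁₁, a],[a*, c]]` and `A₂ = [[d, b],[b*, A₃₃]]`.  With respect to the triple
decomposition `H₁ ⊕ (K_a ⊕ K_b) ⊕ H₃` this means `A₁₃ = 0`, `A₁₂ = [a 0]`,
`A₂₃ = [0; b]` and `A₂₂ = Diag(c, d)`. -/
def diagA (A11 : Matrix (Fin n1) (Fin n1) ℂ) (a : Matrix (Fin n1) (Fin ka) ℂ)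
    (c : Matrix (Fin ka) (Fin ka) ℂ) (d : Matrix (Fin kb) (Fin kb) ℂ)
    (b : Matrix (Fin kb) (Fin n3) ℂ) (A33 : Matrix (Fin n3) (Fin n3) ℂ) :
    Matrix ((Fin n1 ⊕ Fin ka) ⊕ (Fin kb ⊕ Fin n3)) ((Fin n1 ⊕ Fin ka) ⊕ (Fin kb ⊕ Fin n3)) ℂ :=
  fromBlocks (fromBlocks A11 a aᴴ c) 0 0 (fromBlocks d b bᴴ A33)

/-- `D = Diag(I_{H₁}, [[A₂₂,A₂₃],[A₃₂,A₃₃]])` for the above `A`. -/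
def diagD (c : Matrix (Fin ka) (Fin ka) ℂ) (d : Matrix (Fin kb) (Fin kb) ℂ)
    (b : Matrix (Fin kb) (Fin n3) ℂ) (A33 : Matrix (Fin n3) (Fin n3) ℂ) :
    Matrix ((Fin n1 ⊕ Fin ka) ⊕ (Fin kb ⊕ Fin n3)) ((Fin n1 ⊕ Fin ka) ⊕ (Fin kb ⊕ Fin n3)) ℂ :=
  fromBlocks (fromBlocks 1 0 0 c) 0 0 (fromBlocks d b bᴴ A33)

/-- `B = Diag([[A₁₁,A₁₂],[A₂₁,A₂₂]], I_{H₃})` for the above `A`. -/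
def diagB (A11 : Matrix (Fin n1) (Fin n1) ℂ) (a : Matrix (Fin n1) (Fin ka) ℂ)
    (c : Matrix (Fin ka) (Fin ka) ℂ) (d : Matrix (Fin kb) (Fin kb) ℂ) :
    Matrix ((Fin n1 ⊕ Fin ka) ⊕ (Fin kb ⊕ Fin n3)) ((Fin n1 ⊕ Fin ka) ⊕ (Fin kb ⊕ Fin n3)) ℂ :=
  fromBlocks (fromBlocks A11 a aᴴ c) 0 0 (fromBlocks d 0 0 1)

/-- `C = Diag(I_{H₁}, A₂₂, I_{H₃})` for the above `A`. -/
def diagC (c : Matrix (Fin ka) (Fin ka) ℂ) (d : Matrix (Fin kb) (Fin kb) ℂ) :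
    Matrix ((Fin n1 ⊕ Fin ka) ⊕ (Fin kb ⊕ Fin n3)) ((Fin n1 ⊕ Fin ka) ⊕ (Fin kb ⊕ Fin n3)) ℂ :=
  fromBlocks (fromBlocks 1 0 0 c) 0 0 (fromBlocks d 0 0 1)

/-- If `A` is positive definite and block diagonal of the above form, then for any
continuous functions `f, g` on `(0,∞)` with `f·g = 1` (applied via the continuous
functional calculus), `f(A) g(D) = f(B) g(C)`. -/
theorem blockDiagonal_markov_identity
    (A11 : Matrix (Fin n1) (Fin n1) ℂ) (a : Matrix (Fin n1) (Fin ka) ℂ)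
    (c : Matrix (Fin ka) (Fin ka) ℂ) (d : Matrix (Fin kb) (Fin kb) ℂ)
    (b : Matrix (Fin kb) (Fin n3) ℂ) (A33 : Matrix (Fin n3) (Fin n3) ℂ)
    (hA : (diagA A11 a c d b A33).PosDef)
    (f g : ℝ → ℝ) (hf : ContinuousOn f (Set.Ioi 0)) (hg : ContinuousOn g (Set.Ioi 0))
    (hfg : ∀ x > (0 : ℝ), f x * g x = 1) :
    cfc f (diagA A11 a c d b A33) * cfc g (diagD (n1 := n1) c d b A33)
      = cfc f (diagB (n3 := n3) A11 a c d) * cfc g (diagC (n1 := n1) (n3 := n3) c d) := by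
  rw [diagA] at hA
  have hA1 : (fromBlocks A11 a aᴴ c).PosDef := posDef_of_fromBlocks₁₁ hA
  have hA2 : (fromBlocks d b bᴴ A33).PosDef := posDef_of_fromBlocks₂₂ hA
  have hc : c.PosDef := posDef_of_fromBlocks₂₂ hA1
  have hd : d.PosDef := posDef_of_fromBlocks₁₁ hA2
  have hD1 : (fromBlocks (1 : Matrix (Fin n1) (Fin n1) ℂ) 0 0 c).PosDef :=
    posDef_fromBlocks_diag Matrix.PosDef.one hc
  have hB2 : (fromBlocks d 0 0 (1 : Matrix (Fin n3) (Fin n3) ℂ)).PosDef :=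
    posDef_fromBlocks_diag hd Matrix.PosDef.one
  have sA1 : IsSelfAdjoint (fromBlocks A11 a aᴴ c) := hA1.1
  have sA2 : IsSelfAdjoint (fromBlocks d b bᴴ A33) := hA2.1
  have sD1 : IsSelfAdjoint (fromBlocks (1 : Matrix (Fin n1) (Fin n1) ℂ) 0 0 c) := hD1.1
  have sB2 : IsSelfAdjoint (fromBlocks d 0 0 (1 : Matrix (Fin n3) (Fin n3) ℂ)) := hB2.1
  rw [diagA, diagB, diagC, diagD,
    cfc_fromBlocks_diag _ _ sA1 sA2 f, cfc_fromBlocks_diag _ _ sD1 sA2 g,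
    cfc_fromBlocks_diag _ _ sA1 sB2 f, cfc_fromBlocks_diag _ _ sD1 sB2 g,
    fromBlocks_multiply, fromBlocks_multiply]
  simp only [Matrix.mul_zero, Matrix.zero_mul, add_zero, zero_add]
  rw [cfc_mul_cfc_eq_one hA2 f g hfg, cfc_mul_cfc_eq_one hB2 f g hfg]
end
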